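/- Let X be a complex Banach space, let (T(t))_{t≥0} be a strongly continuous semigroup on X that is bounded by a constant M ≥ 1, let Q be a bounded linear operator on X, let 1 < p < ∞ with Hölder conjugate q (so 1/p + 1/q = 1), and let K > 0 be such that ∫₀^∞ |x*(T(t)Qx)|^p dt ≤ K^p ‖x‖^p ‖x*‖^p for all x ∈ X and all bounded linear functionals x* on X. Then for every λ ∈ ℂ with Re λ > 0 and every x ∈ X the Bochner integral R(λ)x := ∫₀^∞ e^{−λt} T(t)x dt converges and ‖R(λ)(Qx)‖ ≤ K (q Re λ)^{−1/q} ‖x‖. -/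

import Mathlib

open MeasureTheory Filter Topology

/-- Banach-space resolvent estimate from a weak `L^p` condition
against bounded linear functionals. -/
theorem stmt16 {X : Type*} [NormedAddCommGroup X] [NormedSpace ℂ X] [CompleteSpace X]
    (T : ℝ → X →L[ℂ] X) (M : ℝ) (hM : 1 ≤ M)
    (hT0 : T 0 = 1)
    (hTadd : ∀ s t : ℝ, 0 ≤ s → 0 ≤ t → T (s + t) = (T s) ∘L (T t))
    (hTcont : ∀ x : X, ContinuousOn (fun t : ℝ => T t x) (Set.Ici (0 : ℝ)))
    (hTbdd : ∀ t : ℝ, 0 ≤ t → ‖T t‖ ≤ M)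
    (Q : X →L[ℂ] X)
    (p q : ℝ) (hp : 1 < p) (hpq : 1 / p + 1 / q = 1)
    (K : ℝ) (hK : 0 < K)
    (hint : ∀ (x : X) (f : X →L[ℂ] ℂ),
      ∫⁻ t in Set.Ioi (0 : ℝ), ENNReal.ofReal (‖f (T t (Q x))‖ ^ p)
        ≤ ENNReal.ofReal (K ^ p * ‖x‖ ^ p * ‖f‖ ^ p)) :
    ∀ lam : ℂ, 0 < lam.re →
      (∀ x : X,
        IntegrableOn (fun t : ℝ => Complex.exp (-(lam * t)) • T t x) (Set.Ioi (0 : ℝ))) ∧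
      (∀ x : X,
        ‖∫ t in Set.Ioi (0 : ℝ), Complex.exp (-(lam * t)) • T t (Q x)‖
          ≤ K * (q * lam.re) ^ (-(1 / q)) * ‖x‖) := by
  intro lam hlam
  have hexpnorm : ∀ t : ℝ, ‖Complex.exp (-(lam * t))‖ = Real.exp (-(lam.re * t)) := by
    intro t
    rw [Complex.norm_exp]
    congr 1
    simp [Complex.mul_re]
  have key : ∀ x : X,
      IntegrableOn (fun t : ℝ => Complex.exp (-(lam * t)) • T t x) (Set.Ioi (0 : ℝ)) := by
    intro x
    have hM0 : 0 ≤ M := le_trans zero_le_one hM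
    have hcont : ContinuousOn (fun t : ℝ => Complex.exp (-(lam * t)) • T t x)
        (Set.Ici (0 : ℝ)) := by
      refine ContinuousOn.smul ?_ (hTcont x)
      exact Continuous.continuousOn (by continuity)
    have hmeas : AEStronglyMeasurable (fun t : ℝ => Complex.exp (-(lam * t)) • T t x)
        (volume.restrict (Set.Ioi (0 : ℝ))) :=
      (hcont.mono Set.Ioi_subset_Ici_self).aestronglyMeasurable measurableSet_Ioi
    refine Integrable.mono' ((exp_neg_integrableOn_Ioi 0 hlam).const_mul (M * ‖x‖)) hmeas ?_
    filter_upwards [self_mem_ae_restrict measurableSet_Ioi] with t ht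
    have ht0 : (0 : ℝ) ≤ t := le_of_lt ht
    rw [norm_smul, hexpnorm t]
    have h2 : ‖T t x‖ ≤ M * ‖x‖ :=
      le_trans ((T t).le_opNorm x)
        (mul_le_mul_of_nonneg_right (hTbdd t ht0) (norm_nonneg x))
    have h3 : Real.exp (-(lam.re * t)) * ‖T t x‖ ≤ Real.exp (-(lam.re * t)) * (M * ‖x‖) :=
      mul_le_mul_of_nonneg_left h2 (Real.exp_pos _).le
    calc Real.exp (-(lam.re * t)) * ‖T t x‖ ≤ Real.exp (-(lam.re * t)) * (M * ‖x‖) := h3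
      _ = M * ‖x‖ * Real.exp (-lam.re * t) := by rw [neg_mul]; ring
  refine ⟨key, ?_⟩
  intro x
  have hpq' : p.HolderConjugate q := Real.holderConjugate_iff.mpr ⟨hp, by simpa [one_div] using hpq⟩
  have hq1 : 1 < q := hpq'.symm.lt
  have hq0 : 0 < q := lt_trans zero_lt_one hq1
  have hp0 : 0 < p := lt_trans zero_lt_one hp
  have hc0 : 0 < q * lam.re := mul_pos hq0 hlam
  have hC0 : (0 : ℝ) ≤ K * (q * lam.re) ^ (-(1 / q)) * ‖x‖ := by positivity
  by_cases hz : (∫ t in Set.Ioi (0 : ℝ), Complex.exp (-(lam * t)) • T t (Q x)) = 0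
  · rw [hz]; simpa using hC0
  obtain ⟨g, hg1, hgz⟩ := exists_dual_vector ℂ _ (norm_ne_zero_iff.mpr hz)
  have hnorm : ‖∫ t in Set.Ioi (0 : ℝ), Complex.exp (-(lam * t)) • T t (Q x)‖
      = ‖g (∫ t in Set.Ioi (0 : ℝ), Complex.exp (-(lam * t)) • T t (Q x))‖ := by
    rw [hgz]; simp
  rw [hnorm, ← ContinuousLinearMap.integral_comp_comm g (key (Q x))]
  -- pointwise norm identity
  have hpt : ∀ t : ℝ, ‖g (Complex.exp (-(lam * t)) • T t (Q x))‖
      = Real.exp (-(lam.re * t)) * ‖g (T t (Q x))‖ := by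
    intro t
    rw [g.map_smul, smul_eq_mul, norm_mul, hexpnorm t]
  set F : ℝ → ℝ := fun t => Real.exp (-(lam.re * t)) with hF
  set G : ℝ → ℝ := fun t => ‖g (T t (Q x))‖ with hG
  have hFcont : Continuous F :=
    Real.continuous_exp.comp ((continuous_const.mul continuous_id).neg)
  have hGcont : ContinuousOn G (Set.Ici (0 : ℝ)) :=
    (g.continuous.comp_continuousOn (hTcont (Q x))).norm
  have hGmeas : AEMeasurable G (volume.restrict (Set.Ioi (0 : ℝ))) :=
    ((hGcont.mono Set.Ioi_subset_Ici_self).aestronglyMeasurable measurableSet_Ioi).aemeasurable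
  have hFGmeas : AEStronglyMeasurable (fun t => F t * G t)
      (volume.restrict (Set.Ioi (0 : ℝ))) :=
    (hFcont.aestronglyMeasurable.restrict.aemeasurable.mul hGmeas).aestronglyMeasurable
  -- the Hölder bound on the lintegral
  have hInt : ∫ t in Set.Ioi (0 : ℝ), Real.exp (-(q * lam.re) * t) = (q * lam.re)⁻¹ := by
    have h := integral_exp_neg_mul_rpow (p := (1 : ℝ)) (b := q * lam.re) one_pos hc0
    have h2 : Real.Gamma (1 / 1 + 1) = 1 := by
      norm_num [Real.Gamma_add_one, Real.Gamma_one]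
    rw [h2, mul_one, show (-1 / (1 : ℝ)) = (-1 : ℝ) by norm_num, Real.rpow_neg_one] at h
    simp only [Real.rpow_one] at h
    exact h
  have hA : (∫⁻ t in Set.Ioi (0 : ℝ), ENNReal.ofReal (F t) ^ q) ^ (1 / q)
      ≤ ENNReal.ofReal ((q * lam.re) ^ (-(1 / q))) := by
    have heq : ∀ t : ℝ, ENNReal.ofReal (F t) ^ q
        = ENNReal.ofReal (Real.exp (-(q * lam.re) * t)) := by
      intro t
      rw [ENNReal.ofReal_rpow_of_pos (Real.exp_pos _)]
      congr 1
      show Real.exp (-(lam.re * t)) ^ q = Real.exp (-(q * lam.re) * t)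
      rw [← Real.exp_mul]
      congr 1
      ring
    simp_rw [heq]
    rw [← ofReal_integral_eq_lintegral_ofReal (exp_neg_integrableOn_Ioi 0 hc0)
      (ae_of_all _ fun t => (Real.exp_pos _).le), hInt,
      ENNReal.ofReal_rpow_of_pos (inv_pos.2 hc0)]
    congr 1
    rw [← Real.rpow_neg_one (q * lam.re), ← Real.rpow_mul hc0.le]
    norm_num
  have hB : (∫⁻ t in Set.Ioi (0 : ℝ), ENNReal.ofReal (G t) ^ p) ^ (1 / p)
      ≤ ENNReal.ofReal (K * ‖x‖) := by
    have heq : ∀ t : ℝ, ENNReal.ofReal (G t) ^ p = ENNReal.ofReal (G t ^ p) := by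
      intro t
      rw [ENNReal.ofReal_rpow_of_nonneg (norm_nonneg _) hp0.le]
    simp_rw [heq]
    have hb1 : (∫⁻ t in Set.Ioi (0 : ℝ), ENNReal.ofReal (G t ^ p))
        ≤ ENNReal.ofReal (K ^ p * ‖x‖ ^ p) := by
      have := hint x g
      rwa [hg1, Real.one_rpow, mul_one] at this
    calc (∫⁻ t in Set.Ioi (0 : ℝ), ENNReal.ofReal (G t ^ p)) ^ (1 / p)
        ≤ ENNReal.ofReal (K ^ p * ‖x‖ ^ p) ^ (1 / p) :=
          ENNReal.rpow_le_rpow hb1 (by positivity)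
      _ = ENNReal.ofReal (K * ‖x‖) := by
          rw [ENNReal.ofReal_rpow_of_nonneg (by positivity) (by positivity),
            ← Real.mul_rpow hK.le (norm_nonneg x),
            ← Real.rpow_mul (by positivity : (0:ℝ) ≤ K * ‖x‖)]
          rw [mul_one_div, div_self hp0.ne', Real.rpow_one]
  have hlin : (∫⁻ t in Set.Ioi (0 : ℝ), ENNReal.ofReal (F t * G t))
      ≤ ENNReal.ofReal (K * (q * lam.re) ^ (-(1 / q)) * ‖x‖) := by
    have hsplit : ∀ t : ℝ, ENNReal.ofReal (F t * G t)
        = ((fun t => ENNReal.ofReal (F t)) * fun t => ENNReal.ofReal (G t)) t := by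
      intro t
      exact ENNReal.ofReal_mul (Real.exp_pos (-(lam.re * t))).le
    calc (∫⁻ t in Set.Ioi (0 : ℝ), ENNReal.ofReal (F t * G t))
        = ∫⁻ t in Set.Ioi (0 : ℝ),
            ((fun t => ENNReal.ofReal (F t)) * fun t => ENNReal.ofReal (G t)) t := by
          simp_rw [hsplit]
      _ ≤ (∫⁻ t in Set.Ioi (0 : ℝ), ENNReal.ofReal (F t) ^ q) ^ (1 / q)
          * (∫⁻ t in Set.Ioi (0 : ℝ), ENNReal.ofReal (G t) ^ p) ^ (1 / p) :=
          ENNReal.lintegral_mul_le_Lp_mul_Lq _ hpq'.symm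
            (hFcont.measurable.ennreal_ofReal.aemeasurable) (hGmeas.ennreal_ofReal)
      _ ≤ ENNReal.ofReal ((q * lam.re) ^ (-(1 / q))) * ENNReal.ofReal (K * ‖x‖) :=
          mul_le_mul' hA hB
      _ = ENNReal.ofReal (K * (q * lam.re) ^ (-(1 / q)) * ‖x‖) := by
          rw [← ENNReal.ofReal_mul (by positivity)]
          congr 1
          ring
  calc ‖∫ t in Set.Ioi (0 : ℝ), g (Complex.exp (-(lam * t)) • T t (Q x))‖
      ≤ ∫ t in Set.Ioi (0 : ℝ), ‖g (Complex.exp (-(lam * t)) • T t (Q x))‖ :=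
        norm_integral_le_integral_norm _
    _ = ∫ t in Set.Ioi (0 : ℝ), F t * G t := by
        refine integral_congr_ae (ae_of_all _ fun t => ?_)
        exact hpt t
    _ ≤ K * (q * lam.re) ^ (-(1 / q)) * ‖x‖ := by
        rw [integral_eq_lintegral_of_nonneg_ae
          (ae_of_all _ fun t => mul_nonneg (Real.exp_pos _).le (norm_nonneg _)) hFGmeas]
        calc (∫⁻ t in Set.Ioi (0 : ℝ), ENNReal.ofReal (F t * G t)).toReal
            ≤ (ENNReal.ofReal (K * (q * lam.re) ^ (-(1 / q)) * ‖x‖)).toReal :=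
              ENNReal.toReal_mono ENNReal.ofReal_ne_top hlin
          _ = K * (q * lam.re) ^ (-(1 / q)) * ‖x‖ := ENNReal.toReal_ofReal hC0
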